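/- Let n ≥ 3, let a, b, c ∈ ℂ with |b| ≠ |c|, and let A' be the matrix obtained from T_n(a, b, c) by swapping the (j, j+1) and (j+1, j) entries for every odd j (so A' has all diagonal entries a and, for 1 ≤ j ≤ n−1, (A')_{j,j+1} = c and (A')_{j+1,j} = b when j is odd, while (A')_{j,j+1} = b and (A')_{j+1,j} = c when j is even). Then A' is unitarily reducible: there exists a subspace L ⊆ ℂ^n with 0 < dim L < n invariant under both A' and (A')*. -/

import Mathlib

open Matrix Complex

noncomputable section

def triToeplitzSwapped (n : ℕ) (a b c : ℂ) : Matrix (Fin n) (Fin n) ℂ :=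
  Matrix.of fun j k =>
    if (j : ℕ) = (k : ℕ) then a
    else if (k : ℕ) = (j : ℕ) + 1 then (if Even (j : ℕ) then c else b)
    else if (j : ℕ) = (k : ℕ) + 1 then (if Even (k : ℕ) then b else c)
    else 0

namespace TTSaux

/-- 0-1 matrix with ones at (j,k), j odd, |j-k|=1. -/
def P (n : ℕ) : Matrix (Fin n) (Fin n) ℂ :=
  Matrix.of fun j k =>
    if Odd (j : ℕ) ∧ ((j : ℕ) = (k : ℕ) + 1 ∨ (k : ℕ) = (j : ℕ) + 1) then 1 else 0

variable {n : ℕ}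

lemma decomp (a b c : ℂ) :
    triToeplitzSwapped n a b c
      = a • (1 : Matrix (Fin n) (Fin n) ℂ) + b • P n + c • (P n)ᵀ := by
  ext j k
  simp only [triToeplitzSwapped, P, of_apply, Matrix.add_apply, Matrix.smul_apply, one_apply,
    transpose_apply, smul_eq_mul, Fin.ext_iff, Nat.even_iff, Nat.odd_iff]
  split_ifs <;> first | (exfalso; omega) | ring

lemma P_conjTranspose : (P n)ᴴ = (P n)ᵀ := by
  ext j k
  simp only [conjTranspose_apply, transpose_apply, P, of_apply]
  split_ifs <;> simp

lemma PT_conjTranspose : ((P n)ᵀ)ᴴ = P n := by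
  ext j k
  simp only [conjTranspose_apply, transpose_apply, P, of_apply]
  split_ifs <;> simp

lemma P_mul_P : P n * P n = 0 := by
  ext j k
  simp only [mul_apply, Matrix.zero_apply, P, of_apply]
  apply Finset.sum_eq_zero
  intro i _
  rcases Nat.even_or_odd (i : ℕ) with he | ho
  · have : ¬ (Odd (i : ℕ) ∧ ((i : ℕ) = (k : ℕ) + 1 ∨ (k : ℕ) = (i : ℕ) + 1)) := by
      rw [Nat.odd_iff] ; rw [Nat.even_iff] at he ; omega
    rw [if_neg this, mul_zero]
  · have : ¬ (Odd (j : ℕ) ∧ ((j : ℕ) = (i : ℕ) + 1 ∨ (i : ℕ) = (j : ℕ) + 1)) := by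
      rw [Nat.odd_iff] at * ; omega
    rw [if_neg this, zero_mul]

/-- `Pᵀ.mulVec` always lands in the even-support subspace. -/
lemma PT_mulVec_odd (w : Fin n → ℂ) (j : Fin n) (hj : Odd (j : ℕ)) :
    (P n)ᵀ.mulVec w j = 0 := by
  simp only [mulVec, dotProduct, transpose_apply, P, of_apply]
  apply Finset.sum_eq_zero
  intro i _
  have : ¬ (Odd (i : ℕ) ∧ ((i : ℕ) = (j : ℕ) + 1 ∨ (j : ℕ) = (i : ℕ) + 1)) := by
    rw [Nat.odd_iff] at * ; omega
  rw [if_neg this, zero_mul]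

/-- `Pᵀ` kills vectors with even support. -/
lemma PT_mulVec_eq_zero {v : Fin n → ℂ} (hv : ∀ k : Fin n, Odd (k : ℕ) → v k = 0) :
    (P n)ᵀ.mulVec v = 0 := by
  funext j
  simp only [mulVec, dotProduct, transpose_apply, P, of_apply, Pi.zero_apply]
  apply Finset.sum_eq_zero
  intro i _
  by_cases h : Odd (i : ℕ) ∧ ((i : ℕ) = (j : ℕ) + 1 ∨ (j : ℕ) = (i : ℕ) + 1)
  · rw [hv i h.1, mul_zero]
  · rw [if_neg h, zero_mul]

/-- The even-support subspace. -/
def Esub (n : ℕ) : Submodule ℂ (Fin n → ℂ) where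
  carrier := {x | ∀ k : Fin n, Odd (k : ℕ) → x k = 0}
  add_mem' := fun hx hy k hk => by simp [hx k hk, hy k hk]
  zero_mem' := fun k _ => rfl
  smul_mem' := fun c x hx k hk => by simp [hx k hk]

lemma mem_Esub {x : Fin n → ℂ} : x ∈ Esub n ↔ ∀ k : Fin n, Odd (k : ℕ) → x k = 0 :=
  Iff.rfl

/-- `Q = Pᵀ * P` as an endomorphism of `Esub n`. -/
def Qend (n : ℕ) : Module.End ℂ (Esub n) where
  toFun x := ⟨((P n)ᵀ * P n).mulVec x, by
    intro k hk
    rw [← Matrix.mulVec_mulVec]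
    exact PT_mulVec_odd _ _ hk⟩
  map_add' x y := by
    apply Subtype.ext
    simp [Matrix.mulVec_add]
  map_smul' c x := by
    apply Subtype.ext
    simp [Matrix.mulVec_smul]

end TTSaux

open TTSaux in
theorem triToeplitzSwapped_unitarilyReducible {n : ℕ} (hn : 3 ≤ n) (a b c : ℂ)
    (hbc : ‖b‖ ≠ ‖c‖) :
    ∃ L : Submodule ℂ (Fin n → ℂ), 0 < Module.finrank ℂ L ∧ Module.finrank ℂ L < n ∧
      (∀ x ∈ L, (triToeplitzSwapped n a b c).mulVec x ∈ L) ∧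
      (∀ x ∈ L, (triToeplitzSwapped n a b c)ᴴ.mulVec x ∈ L) := by
  have hn0 : 0 < n := by omega
  -- Esub is nontrivial
  haveI : Nontrivial (Esub n) := by
    refine nontrivial_of_ne ⟨Pi.single ⟨0, hn0⟩ 1, ?_⟩ 0 ?_
    · intro k hk
      have : k ≠ ⟨0, hn0⟩ := by
        intro h; subst h; simp [Nat.odd_iff] at hk
      simp [Pi.single_eq_of_ne this]
    · intro h
      have h2 : (Pi.single ⟨0, hn0⟩ 1 : Fin n → ℂ) = 0 := congrArg Subtype.val h
      have := congrFun h2 ⟨0, hn0⟩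
      simp at this
  obtain ⟨μ, hμ⟩ := Module.End.exists_eigenvalue (Qend n)
  obtain ⟨v, hv⟩ := hμ.exists_hasEigenvector
  have hvE : ∀ k : Fin n, Odd (k : ℕ) → (v : Fin n → ℂ) k = 0 := v.2
  have hv0 : (v : Fin n → ℂ) ≠ 0 := fun h => hv.2 (Subtype.ext h)
  have hQv : ((P n)ᵀ * P n).mulVec (v : Fin n → ℂ) = μ • (v : Fin n → ℂ) := by
    have := congrArg (fun x : Esub n => (x : Fin n → ℂ)) hv.apply_eq_smul
    simpa [Qend] using this
  set w : Fin n → ℂ := (P n).mulVec (v : Fin n → ℂ) with hw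
  set L : Submodule ℂ (Fin n → ℂ) := Submodule.span ℂ {(v : Fin n → ℂ), w} with hL
  have hvL : (v : Fin n → ℂ) ∈ L := Submodule.subset_span (by simp)
  have hwL : w ∈ L := Submodule.subset_span (by simp)
  -- key mulVec computations
  have hPTv : (P n)ᵀ.mulVec (v : Fin n → ℂ) = 0 := PT_mulVec_eq_zero hvE
  have hPw : (P n).mulVec w = 0 := by
    rw [hw, Matrix.mulVec_mulVec, P_mul_P, Matrix.zero_mulVec]
  have hPTw : (P n)ᵀ.mulVec w = μ • (v : Fin n → ℂ) := by
    rw [hw, Matrix.mulVec_mulVec, hQv]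
  have hMx : ∀ x : Fin n → ℂ, (triToeplitzSwapped n a b c).mulVec x
      = a • x + b • (P n).mulVec x + c • (P n)ᵀ.mulVec x := by
    intro x
    rw [decomp a b c]
    simp [Matrix.add_mulVec, Matrix.smul_mulVec, Matrix.one_mulVec]
  have hMHx : ∀ x : Fin n → ℂ, (triToeplitzSwapped n a b c)ᴴ.mulVec x
      = (starRingEnd ℂ a) • x + (starRingEnd ℂ b) • (P n)ᵀ.mulVec x
        + (starRingEnd ℂ c) • (P n).mulVec x := by
    intro x
    rw [decomp a b c]
    simp only [conjTranspose_add, conjTranspose_smul, conjTranspose_one,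
      P_conjTranspose, PT_conjTranspose]
    simp [Matrix.add_mulVec, Matrix.smul_mulVec, Matrix.one_mulVec]
  refine ⟨L, ?_, ?_, ?_, ?_⟩
  · rw [Module.finrank_pos_iff]
    exact ⟨⟨⟨_, hvL⟩, 0, fun h => hv0 (by simpa using congrArg Subtype.val h)⟩⟩
  · have h2 : Module.finrank ℂ L ≤ 2 := by
      have := finrank_span_le_card (R := ℂ) ({(v : Fin n → ℂ), w} : Set (Fin n → ℂ))
      refine le_trans this ?_
      simp [Set.toFinset_insert]
      exact Finset.card_insert_le _ _
    omega
  · intro x hx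
    induction hx using Submodule.span_induction with
    | mem x hx =>
      rcases hx with h | h
      · subst h
        rw [hMx, hPTv, smul_zero]
        exact add_mem (add_mem (L.smul_mem _ hvL) (L.smul_mem _ hwL)) (L.zero_mem)
      · simp only [Set.mem_singleton_iff] at h
        subst h
        rw [hMx, hPw, hPTw, smul_zero]
        refine add_mem (add_mem (L.smul_mem _ hwL) (L.zero_mem)) (L.smul_mem _ (L.smul_mem _ hvL))
    | zero => simp [Matrix.mulVec_zero, L.zero_mem]
    | add x y _ _ hx hy => rw [Matrix.mulVec_add]; exact add_mem hx hy
    | smul c x _ hx => rw [Matrix.mulVec_smul]; exact L.smul_mem _ hx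
  · intro x hx
    induction hx using Submodule.span_induction with
    | mem x hx =>
      rcases hx with h | h
      · subst h
        rw [hMHx, hPTv, smul_zero]
        exact add_mem (add_mem (L.smul_mem _ hvL) (L.zero_mem)) (L.smul_mem _ hwL)
      · simp only [Set.mem_singleton_iff] at h
        subst h
        rw [hMHx, hPw, hPTw, smul_zero]
        exact add_mem (add_mem (L.smul_mem _ hwL) (L.smul_mem _ (L.smul_mem _ hvL))) (L.zero_mem)
    | zero => simp [Matrix.mulVec_zero, L.zero_mem]
    | add x y _ _ hx hy => rw [Matrix.mulVec_add]; exact add_mem hx hy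
    | smul c x _ hx => rw [Matrix.mulVec_smul]; exact L.smul_mem _ hx
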